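/- If θ > 1 is a real number, then the cardinality of D_n(θ) = {∑_{k=1}^n a_k θ^k : a_k ∈ {0,1,...,⌊θ⌋}} is at least c·θ^n for some constant c > 0 independent of n. -/

import Mathlib

open Finset Polynomial

/-- `Dn θ n` is the set of sums `∑_{k=1}^n a_k θ^k` with digits `a_k ∈ {0,…,⌊θ⌋}`. -/
noncomputable def Dn (θ : ℝ) (n : ℕ) : Finset ℝ :=
  (Finset.univ : Finset (Fin n → Fin (⌊θ⌋₊ + 1))).image
    (fun a => ∑ k : Fin n, (a k : ℝ) * θ ^ ((k : ℕ) + 1))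

/-- A Perron number: an algebraic integer `θ > 1` all of whose other Galois
conjugates (roots of its minimal polynomial in `ℂ`) have absolute value `< θ`. -/
def IsPerron (θ : ℝ) : Prop :=
  1 < θ ∧ IsIntegral ℤ θ ∧
    ∀ z : ℂ, Polynomial.aeval z (minpoly ℤ θ) = 0 → z ≠ (θ : ℂ) → ‖z‖ < θ

noncomputable def grem (θ : ℝ) : ℕ → ℝ → ℝ
  | 0, x => x
  | (k+1), x => Int.fract (θ * grem θ k x)

noncomputable def gdig (θ : ℝ) (k : ℕ) (x : ℝ) : ℤ := ⌊θ * grem θ k x⌋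

lemma grem_mem (θ : ℝ) (hθ : 1 < θ) {x : ℝ} (hx : x ∈ Set.Ico (0:ℝ) 1) (n : ℕ) :
    grem θ n x ∈ Set.Ico (0:ℝ) 1 := by
  induction n with
  | zero => exact hx
  | succ k ih => exact ⟨Int.fract_nonneg _, Int.fract_lt_one _⟩

lemma gdig_nonneg (θ : ℝ) (hθ : 1 < θ) {x : ℝ} (hx : x ∈ Set.Ico (0:ℝ) 1) (k : ℕ) :
    0 ≤ gdig θ k x := by
  have h := grem_mem θ hθ hx k
  exact Int.floor_nonneg.mpr (mul_nonneg (by linarith) h.1)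

lemma gdig_le (θ : ℝ) (hθ : 1 < θ) {x : ℝ} (hx : x ∈ Set.Ico (0:ℝ) 1) (k : ℕ) :
    gdig θ k x ≤ (⌊θ⌋₊ : ℤ) := by
  have h := grem_mem θ hθ hx k
  have h1 : θ * grem θ k x ≤ θ := by nlinarith [h.1, h.2]
  have := Int.floor_le_floor h1
  calc gdig θ k x ≤ ⌊θ⌋ := this
    _ = (⌊θ⌋₊ : ℤ) := (Int.natCast_floor_eq_floor (by linarith)).symm

lemma gkey (θ : ℝ) (hθ : 1 < θ) {x : ℝ} (hx : x ∈ Set.Ico (0:ℝ) 1) (n : ℕ) :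
    θ ^ n * x = (∑ k ∈ Finset.range n, (gdig θ k x : ℝ) * θ ^ (n - 1 - k)) + grem θ n x := by
  induction n with
  | zero => simp [grem]
  | succ n ih =>
    have h1 : θ ^ (n+1) * x = θ * (θ ^ n * x) := by ring
    rw [h1, ih, mul_add, Finset.mul_sum]
    have h2 : θ * grem θ n x = (gdig θ n x : ℝ) + grem θ (n+1) x := by
      have : grem θ (n+1) x = Int.fract (θ * grem θ n x) := rfl
      rw [this, gdig, Int.fract]
      ring
    rw [h2, Finset.sum_range_succ]
    have h3 : ∀ k ∈ Finset.range n,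
        θ * ((gdig θ k x : ℝ) * θ ^ (n - 1 - k)) = (gdig θ k x : ℝ) * θ ^ (n + 1 - 1 - k) := by
      intro k hk
      rw [Finset.mem_range] at hk
      have : n + 1 - 1 - k = (n - 1 - k) + 1 := by omega
      rw [this, pow_succ]; ring
    rw [Finset.sum_congr rfl h3]
    have : n + 1 - 1 - n = 0 := by omega
    rw [this]
    ring

noncomputable def gval (θ : ℝ) (n : ℕ) (x : ℝ) : ℝ :=
  ∑ k ∈ Finset.range n, (gdig θ k x : ℝ) * θ ^ (n - k)

lemma gval_close (θ : ℝ) (hθ : 1 < θ) {x : ℝ} (hx : x ∈ Set.Ico (0:ℝ) 1) (n : ℕ) :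
    θ ^ (n+1) * x - θ < gval θ n x ∧ gval θ n x ≤ θ ^ (n+1) * x := by
  have key := gkey θ hθ hx n
  have hval : gval θ n x = θ * (∑ k ∈ Finset.range n, (gdig θ k x : ℝ) * θ ^ (n - 1 - k)) := by
    rw [gval, Finset.mul_sum]
    refine Finset.sum_congr rfl fun k hk => ?_
    rw [Finset.mem_range] at hk
    have : n - k = (n - 1 - k) + 1 := by omega
    rw [this, pow_succ]; ring
  have hr := grem_mem θ hθ hx n
  have h1 : θ ^ (n+1) * x = gval θ n x + θ * grem θ n x := by
    rw [hval]
    have : θ ^ (n+1) * x = θ * (θ ^ n * x) := by ring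
    rw [this, key]; ring
  constructor
  · nlinarith [hr.1, hr.2]
  · nlinarith [hr.1, hr.2]

lemma gval_mem_Dn (θ : ℝ) (hθ : 1 < θ) {x : ℝ} (hx : x ∈ Set.Ico (0:ℝ) 1) (n : ℕ) :
    gval θ n x ∈ Dn θ n := by
  rw [Dn, Finset.mem_image]
  refine ⟨fun j => ⟨(gdig θ (n - 1 - j) x).toNat, ?_⟩, Finset.mem_univ _, ?_⟩
  · have h1 := gdig_le θ hθ hx (n - 1 - j)
    have h2 := gdig_nonneg θ hθ hx (n - 1 - j)
    omega
  · have hcoe : ∀ j : Fin n,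
        (((gdig θ (n - 1 - (j:ℕ)) x).toNat : ℕ) : ℝ) = (gdig θ (n - 1 - (j:ℕ)) x : ℝ) := by
      intro j
      have := gdig_nonneg θ hθ hx (n - 1 - (j:ℕ))
      exact_mod_cast congrArg (fun z : ℤ => (z : ℝ)) (Int.toNat_of_nonneg this)
    calc ∑ j : Fin n, (((gdig θ (n - 1 - (j:ℕ)) x).toNat : ℕ) : ℝ) * θ ^ ((j:ℕ) + 1)
        = ∑ j : Fin n, (gdig θ (n - 1 - (j:ℕ)) x : ℝ) * θ ^ ((j:ℕ) + 1) := by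
          exact Finset.sum_congr rfl fun j _ => by rw [hcoe j]
      _ = ∑ j ∈ Finset.range n, (gdig θ (n - 1 - j) x : ℝ) * θ ^ (j + 1) :=
          Fin.sum_univ_eq_sum_range (fun j => (gdig θ (n - 1 - j) x : ℝ) * θ ^ (j + 1)) n
      _ = ∑ j ∈ Finset.range n, (gdig θ j x : ℝ) * θ ^ (n - j) := by
          conv_rhs => rw [← Finset.sum_range_reflect]
          refine Finset.sum_congr rfl fun j hj => ?_
          rw [Finset.mem_range] at hj
          have e2 : n - (n - 1 - j) = j + 1 := by omega
          rw [e2]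
      _ = gval θ n x := rfl

theorem stmt_0 (θ : ℝ) (hθ : 1 < θ) :
    ∃ c : ℝ, 0 < c ∧ ∀ n : ℕ, c * θ ^ n ≤ ((Dn θ n).card : ℝ) := by
  refine ⟨1/2, by norm_num, fun n => ?_⟩
  have hθ0 : (0:ℝ) < θ := by linarith
  have hpow : (1:ℝ) ≤ θ ^ n := one_le_pow₀ hθ.le
  set N := ⌊θ ^ n⌋₊ with hN
  -- injection from range N into Dn θ n
  have hinj : ∀ m ∈ Finset.range N, gval θ n ((m:ℝ) / θ ^ n) ∈ Dn θ n := by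
    intro m hm
    rw [Finset.mem_range] at hm
    apply gval_mem_Dn θ hθ
    constructor
    · positivity
    · rw [div_lt_one (by positivity)]
      calc (m:ℝ) < N := by exact_mod_cast hm
        _ ≤ θ ^ n := Nat.floor_le (by positivity)
  have hNle : (N:ℝ) ≤ (Dn θ n).card := by
    have := Finset.card_le_card_of_injOn (s := Finset.range N) (t := Dn θ n) (fun m => gval θ n ((m:ℝ) / θ ^ n)) hinj ?_
    · simpa using (Nat.cast_le.mpr this : ((Finset.range N).card : ℝ) ≤ _)
    · intro a ha b hb hab
      rw [Finset.mem_coe, Finset.mem_range] at ha hb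
      by_contra hne
      have hxa : ((a:ℝ) / θ ^ n) ∈ Set.Ico (0:ℝ) 1 := by
        constructor
        · positivity
        · rw [div_lt_one (by positivity)]
          calc (a:ℝ) < N := by exact_mod_cast ha
            _ ≤ θ ^ n := Nat.floor_le (by positivity)
      have hxb : ((b:ℝ) / θ ^ n) ∈ Set.Ico (0:ℝ) 1 := by
        constructor
        · positivity
        · rw [div_lt_one (by positivity)]
          calc (b:ℝ) < N := by exact_mod_cast hb
            _ ≤ θ ^ n := Nat.floor_le (by positivity)
      have ca := gval_close θ hθ hxa n
      have cb := gval_close θ hθ hxb n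
      have hea : θ ^ (n+1) * ((a:ℝ) / θ ^ n) = θ * a := by
        field_simp; ring
      have heb : θ ^ (n+1) * ((b:ℝ) / θ ^ n) = θ * b := by
        field_simp; ring
      rw [hea] at ca
      rw [heb] at cb
      rcases Nat.lt_or_ge a b with h | h
      · have : (a:ℝ) + 1 ≤ b := by exact_mod_cast h
        nlinarith [ca.1, ca.2, cb.1, cb.2]
      · have hba : b < a := by omega
        have : (b:ℝ) + 1 ≤ a := by exact_mod_cast hba
        nlinarith [ca.1, ca.2, cb.1, cb.2]
  -- θ^n / 2 ≤ N
  have hhalf : θ ^ n / 2 ≤ (N:ℝ) := by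
    rcases le_or_gt 2 (θ ^ n) with h | h
    · have := Nat.sub_one_lt_floor (θ ^ n)
      linarith
    · have h1 : 0 < N := Nat.floor_pos.mpr hpow
      have : (1:ℝ) ≤ N := by exact_mod_cast h1
      linarith
  linarith
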